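/- arXiv:1511.04762 — 2 statements merged into one kernel-verified Lean document; each statement's English description precedes it below -/
import Mathlib

section
/- Let α be a type with decidable equality, s : Multiset α, and bins : List (List α) a valid packing of s, i.e., (bins.map (fun b => (b : Multiset α))).sum = s and every b ∈ bins satisfies List.Chain' (· ≠ ·) b. Then for every color a : α, 2 * s.count a ≤ Multiset.card s + bins.length. In particular, the number of bins in any valid packing is at least the discrepancy s.count a − (Multiset.card s − s.count a). -/
private lemma chain'_count_le {α : Type*} [DecidableEq α] (a : α) :
    ∀ l : List α, List.Chain' (· ≠ ·) l → 2 * l.count a ≤ l.length + 1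
  | [], _ => by simp
  | [x], _ => by by_cases h : x = a <;> simp [h, List.count_cons]
  | x :: y :: t, h => by
      have hxy : x ≠ y := (List.isChain_cons_cons.mp h).1
      have h2 : List.Chain' (· ≠ ·) (y :: t) := (List.isChain_cons_cons.mp h).2
      have ih := chain'_count_le a t h2.tail
      simp only [List.count_cons, List.length_cons]
      by_cases hx : x = a <;> by_cases hy : y = a <;>
        simp_all <;> omega

private lemma map_coe_eq {α : Type*} (bins : List (List α)) :
    (bins.map (fun b => (b : Multiset α))).sum
      = (bins.map (fun b : List α => (b : Multiset α))).sum := by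
  induction bins with
  | nil => rfl
  | cons b t ih => simp_all [List.flatMap_cons]

theorem packing_discrepancy_lower_bound {α : Type*} [DecidableEq α] (s : Multiset α)
    (bins : List (List α))
    (hsum : (bins.map (fun b => (b : Multiset α))).sum = s)
    (hvalid : ∀ b ∈ bins, List.Chain' (· ≠ ·) b) :
    ∀ a : α, 2 * s.count a ≤ Multiset.card s + bins.length ∧
      s.count a - (Multiset.card s - s.count a) ≤ bins.length := by
  intro a
  rw [map_coe_eq] at hsum
  subst hsum
  have key : ∀ L : List (List α), (∀ b ∈ L, List.Chain' (· ≠ ·) b) →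
      2 * Multiset.count a (L.map (fun b : List α => (b : Multiset α))).sum ≤
        Multiset.card (L.map (fun b : List α => (b : Multiset α))).sum + L.length := by
    intro L
    induction L with
    | nil => simp
    | cons b t ih =>
        intro hL
        have hb := chain'_count_le a b (hL b (by simp))
        have ht := ih (fun x hx => hL x (by simp [hx]))
        rw [List.map_cons, List.sum_cons, Multiset.count_add, Multiset.card_add]
        simp only [Multiset.coe_count, Multiset.coe_card, List.length_cons]
        omega
  have h := key bins hvalid
  exact ⟨h, by omega⟩
end

section
/- Let α be a type with decidable equality, L an odd natural number with L ≥ 3, s : Multiset α, and m : α a most frequent color of s (for all a : α, s.count a ≤ s.count m). Set n = Multiset.card s. Then the minimum number of bins in a valid capacity-L packing of s equals max (2 * s.count m - n) ((n + L - 1) / L) (natural-number truncated subtraction), i.e., the maximum of the discrepancy and ⌈n/L⌉. -/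
set_option linter.unusedSectionVars false
set_option maxHeartbeats 1000000

section AltUnitAux
variable {α : Type*} [DecidableEq α]

theorem chain'_two_mul_count_le : ∀ (N : ℕ) (l : List α), l.length ≤ N →
    l.Chain' (· ≠ ·) → ∀ a : α, 2 * l.count a ≤ l.length + 1 := by
  intro N
  induction N using Nat.strong_induction_on with
  | _ N ih =>
    intro l hlen hch a
    match l with
    | [] => simp
    | [b] => simp [List.count_cons]; split <;> omega
    | b :: c :: t =>
      have hbc : b ≠ c := (List.isChain_cons_cons.mp hch).1
      have hct : (c :: t).Chain' (· ≠ ·) := (List.isChain_cons_cons.mp hch).2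
      have htt : t.Chain' (· ≠ ·) := hct.tail
      have hN : 1 ≤ N := by simp at hlen; omega
      have := ih (N - 1) (by omega) t (by simp at hlen ⊢; omega) htt a
      simp only [List.count_cons, List.length_cons]
      by_cases h1 : c = a <;> by_cases h2 : b = a <;> simp [h1, h2] at * <;> omega

/-- interleave: x :: o₁ :: x :: o₂ :: ... :: x -/

def ilv (x : α) : List α → List α
  | [] => [x]
  | o :: t => x :: o :: ilv x t

theorem ilv_length (x : α) (O : List α) : (ilv x O).length = 2 * O.length + 1 := by
  induction O with
  | nil => simp [ilv]
  | cons o t ih => simp [ilv, ih]; omega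

theorem ilv_coe (x : α) (O : List α) :
    ((ilv x O : List α) : Multiset α) = Multiset.replicate (O.length + 1) x + ↑O := by
  induction O with
  | nil => simp [ilv]
  | cons o t ih =>
      simp only [ilv, List.length_cons]
      rw [show ((x :: o :: ilv x t : List α) : Multiset α) = x ::ₘ o ::ₘ ↑(ilv x t) by rfl, ih]
      rw [show ((o :: t : List α) : Multiset α) = o ::ₘ ↑t by rfl]
      simp only [Multiset.replicate_add, Multiset.replicate_one]
      simp only [← Multiset.singleton_add]
      abel

theorem ilv_head (x : α) (O : List α) : (ilv x O).head? = some x := by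
  cases O <;> rfl

theorem ilv_chain (x : α) (O : List α) (h : ∀ o ∈ O, o ≠ x) :
    (ilv x O).Chain' (· ≠ ·) := by
  induction O with
  | nil => exact List.isChain_singleton _
  | cons o t ih =>
      have ho : o ≠ x := h o (by simp)
      have := ih (fun z hz => h z (by simp [hz]))
      simp only [ilv]
      simp only [List.Chain']
      rw [List.isChain_cons, List.isChain_cons]
      refine ⟨?_, ?_, this⟩
      · intro y hy; simp at hy; subst hy; exact fun e => ho e.symm
      · intro y hy; rw [ilv_head] at hy; simp at hy; subst hy; exact ho

def chunks (cap : ℕ) : List α → List (List α)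
  | [] => []
  | a :: l => (a :: l.take (cap - 1)) :: chunks cap (l.drop (cap - 1))
termination_by l => l.length
decreasing_by simp <;> omega

theorem chunks_sum (cap : ℕ) : ∀ (N : ℕ) (l : List α), l.length ≤ N →
    ((chunks cap l).map (fun b : List α => (b : Multiset α))).sum = ↑l := by
  intro N
  induction N using Nat.strong_induction_on with
  | _ N ih =>
    intro l hl
    match l with
    | [] => rw [chunks.eq_1]; simp
    | a :: l =>
      rw [chunks.eq_2]
      have hN : 1 ≤ N := by simp at hl; omega
      have h2 := ih (N-1) (by omega) (l.drop (cap-1)) (by simp at hl ⊢; omega)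
      rw [List.map_cons, List.sum_cons, h2]
      rw [show ((a :: List.take (cap-1) l : List α) : Multiset α)
            = a ::ₘ ↑(List.take (cap-1) l) by rfl]
      rw [show ((a :: l : List α) : Multiset α) = a ::ₘ ↑l by rfl]
      rw [Multiset.cons_add]
      congr 1
      rw [show (↑(List.take (cap-1) l) + ↑(List.drop (cap-1) l) : Multiset α) = ↑(List.take (cap-1) l ++ List.drop (cap-1) l) from rfl, List.take_append_drop]

theorem chunks_len (cap : ℕ) (hcap : 1 ≤ cap) : ∀ (N : ℕ) (l : List α), l.length ≤ N →
    ∀ p ∈ chunks cap l, p.length ≤ cap := by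
  intro N
  induction N using Nat.strong_induction_on with
  | _ N ih =>
    intro l hl p hp
    match l with
    | [] => rw [chunks.eq_1] at hp; simp at hp
    | a :: l =>
      rw [chunks.eq_2] at hp
      have hN : 1 ≤ N := by simp at hl; omega
      rcases List.mem_cons.mp hp with h | h
      · subst h; simp; have := List.length_take_le (cap-1) l; omega
      · exact ih (N-1) (by omega) (l.drop (cap-1)) (by simp at hl ⊢; omega) p h

theorem chunks_chain (cap : ℕ) {R : α → α → Prop} : ∀ (N : ℕ) (l : List α), l.length ≤ N →
    l.Chain' R → ∀ p ∈ chunks cap l, p.Chain' R := by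
  intro N
  induction N using Nat.strong_induction_on with
  | _ N ih =>
    intro l hl hc p hp
    match l with
    | [] => rw [chunks.eq_1] at hp; simp at hp
    | a :: l =>
      rw [chunks.eq_2] at hp
      have hN : 1 ≤ N := by simp at hl; omega
      have hsplit : ((a :: l.take (cap-1)) ++ l.drop (cap-1)).Chain' R := by
        rwa [show (a :: l.take (cap-1)) ++ l.drop (cap-1) = a :: l by
          rw [List.cons_append, List.take_append_drop]]
      simp only [List.Chain'] at hsplit
      rw [List.isChain_append] at hsplit
      rcases List.mem_cons.mp hp with h | h
      · subst h; exact hsplit.1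
      · exact ih (N-1) (by omega) (l.drop (cap-1)) (by simp at hl ⊢; omega) hsplit.2.1 p h

theorem chunks_subset (cap : ℕ) : ∀ (N : ℕ) (l : List α), l.length ≤ N →
    ∀ p ∈ chunks cap l, ∀ y ∈ p, y ∈ l := by
  intro N
  induction N using Nat.strong_induction_on with
  | _ N ih =>
    intro l hl p hp y hy
    match l with
    | [] => rw [chunks.eq_1] at hp; simp at hp
    | a :: l =>
      rw [chunks.eq_2] at hp
      have hN : 1 ≤ N := by simp at hl; omega
      rcases List.mem_cons.mp hp with h | h
      · subst h
        rcases List.mem_cons.mp hy with h | h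
        · simp [h]
        · exact List.mem_cons_of_mem _ (List.mem_of_mem_take h)
      · have := ih (N-1) (by omega) (l.drop (cap-1)) (by simp at hl ⊢; omega) p h y hy
        exact List.mem_cons_of_mem _ (List.mem_of_mem_drop this)

theorem chunks_count (cap : ℕ) (hcap : 1 ≤ cap) : ∀ (N : ℕ) (l : List α), l.length ≤ N →
    (chunks cap l).length = (l.length + cap - 1) / cap := by
  intro N
  induction N using Nat.strong_induction_on with
  | _ N ih =>
    intro l hl
    match l with
    | [] =>
      rw [chunks.eq_1]
      simp [Nat.div_eq_of_lt (show cap - 1 < cap by omega)]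
    | a :: l =>
      rw [chunks.eq_2]
      have hN : 1 ≤ N := by simp at hl; omega
      have h2 := ih (N-1) (by omega) (l.drop (cap-1)) (by simp at hl ⊢; omega)
      simp only [List.length_cons, h2, List.length_drop]
      have hr : l.length + 1 + cap - 1 = l.length + cap := by omega
      rw [hr, Nat.add_div_right _ (show 0 < cap by omega)]
      congr 1
      rcases le_or_gt l.length (cap - 1) with h | h
      · rw [show l.length - (cap-1) = 0 by omega]
        rw [Nat.div_eq_of_lt (by omega), Nat.div_eq_of_lt (by omega)]
      · congr 1; omega

theorem count_two_le_card {a b : α} (hab : a ≠ b) (t : Multiset α) :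
    t.count a + t.count b ≤ Multiset.card t := by
  induction t using Multiset.induction_on with
  | empty => simp
  | cons x t ih =>
    rw [Multiset.count_cons, Multiset.count_cons]
    simp only [Multiset.card_cons]
    by_cases h1 : a = x <;> by_cases h2 : b = x <;> simp [h1, h2] at * <;> omega

/-- Arrangement lemma with a banned first element. -/

theorem arrange_banned : ∀ (N : ℕ) (t : Multiset α), Multiset.card t ≤ N →
    (∀ y, 2 * t.count y ≤ Multiset.card t + 1) →
    ∀ b : α, 2 * t.count b ≤ Multiset.card t →
    ∃ l : List α, (l : Multiset α) = t ∧ l.Chain' (· ≠ ·) ∧ l.head? ≠ some b := by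
  intro N
  induction N using Nat.strong_induction_on with
  | _ N ih =>
    intro t hcard hbd b hb
    rcases eq_or_ne t 0 with rfl | hne
    · exact ⟨[], rfl, List.isChain_nil, by simp⟩
    have hpos : 0 < Multiset.card t := Multiset.card_pos.mpr hne
    -- the colors of t other than b
    have hFne : (t.toFinset.erase b).Nonempty := by
      rcases Finset.eq_empty_or_nonempty (t.toFinset.erase b) with he | h
      · exfalso
        have : ∀ x ∈ t, b = x := by
          intro x hx
          by_contra hxb
          have : x ∈ t.toFinset.erase b := by
            rw [Finset.mem_erase]
            exact ⟨fun h => hxb h.symm, Multiset.mem_toFinset.mpr hx⟩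
          simp [he] at this
        have := Multiset.count_eq_card.mpr this
        omega
      · exact h
    obtain ⟨a, haF, hamax⟩ := Finset.exists_max_image (t.toFinset.erase b) t.count hFne
    have hab : a ≠ b := (Finset.mem_erase.mp haF).1
    have hat : a ∈ t := Multiset.mem_toFinset.mp (Finset.mem_erase.mp haF).2
    have hcnta : 1 ≤ t.count a := Multiset.one_le_count_iff_mem.mpr hat
    set t' := t.erase a with ht'
    have hcard' : Multiset.card t' = Multiset.card t - 1 := Multiset.card_erase_of_mem hat
    have hcnt' : ∀ y, t'.count y = t.count y - (if y = a then 1 else 0) := by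
      intro y
      by_cases h : y = a
      · subst h; simp [ht', Multiset.count_erase_self]
      · simp [ht', h, Multiset.count_erase_of_ne h]
    have hbd' : ∀ y, 2 * t'.count y ≤ Multiset.card t' + 1 := by
      intro y
      rw [hcnt', hcard']
      by_cases hya : y = a
      · have := hbd a; simp [hya]; omega
      · simp only [hya, if_false]
        by_cases hyb : y = b
        · subst hyb; omega
        · by_cases hyt : y ∈ t
          · have hyF : y ∈ t.toFinset.erase b :=
              Finset.mem_erase.mpr ⟨hyb, Multiset.mem_toFinset.mpr hyt⟩
            have h1 := hamax y hyF
            have h2 := count_two_le_card hya t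
            omega
          · have : t.count y = 0 := Multiset.count_eq_zero.mpr hyt
            omega
    have hba' : 2 * t'.count a ≤ Multiset.card t' := by
      rw [hcnt', hcard']
      have := hbd a
      simp
      omega
    obtain ⟨l', hl'coe, hl'chain, hl'head⟩ :=
      ih (N - 1) (by omega) t' (by omega) hbd' a hba'
    refine ⟨a :: l', ?_, ?_, ?_⟩
    · rw [show ((a :: l' : List α) : Multiset α) = a ::ₘ ↑l' from rfl, hl'coe]
      exact Multiset.cons_erase hat
    · simp only [List.Chain']
      rw [List.isChain_cons]
      refine ⟨?_, hl'chain⟩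
      intro y hy
      intro hay
      subst hay
      exact hl'head (by rw [hy])
    · simp
      exact fun h => hab h

theorem arrange (t : Multiset α) (hbd : ∀ y, 2 * t.count y ≤ Multiset.card t + 1) :
    ∃ l : List α, (l : Multiset α) = t ∧ l.Chain' (· ≠ ·) := by
  rcases eq_or_ne t 0 with rfl | hne
  · exact ⟨[], rfl, List.isChain_nil⟩
  obtain ⟨u, hu⟩ := Multiset.exists_mem_of_ne_zero hne
  have hpos : 0 < Multiset.card t := Multiset.card_pos.mpr hne
  by_cases hall : ∀ x ∈ t, u = x
  · -- t is all u's
    have hcu := Multiset.count_eq_card.mpr hall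
    have h1 : Multiset.card t = 1 := by have := hbd u; omega
    obtain ⟨v, rfl⟩ := Multiset.card_eq_one.mp h1
    exact ⟨[v], by simp, List.isChain_singleton _⟩
  · push_neg at hall
    obtain ⟨z, hzt, hzu⟩ := hall
    rcases le_total (t.count u) (t.count z) with h | h
    · obtain ⟨l, h1, h2, _⟩ := arrange_banned (Multiset.card t) t le_rfl hbd u
        (by have := count_two_le_card (fun e => hzu e.symm) t; omega)
      exact ⟨l, h1, h2⟩
    · obtain ⟨l, h1, h2, _⟩ := arrange_banned (Multiset.card t) t le_rfl hbd z
        (by have := count_two_le_card (fun e => hzu e.symm) t; omega)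
      exact ⟨l, h1, h2⟩

theorem packA (L : ℕ) (hL : 1 ≤ L) (t : Multiset α)
    (hbd : ∀ y, 2 * t.count y ≤ Multiset.card t + 1) :
    ∃ bins : List (List α),
      bins.length = (Multiset.card t + L - 1) / L ∧
      (bins.map (fun b : List α => (b : Multiset α))).sum = t ∧
      ∀ b ∈ bins, b.length ≤ L ∧ List.Chain' (· ≠ ·) b := by
  obtain ⟨l, hlcoe, hlchain⟩ := arrange t hbd
  have hlen : l.length = Multiset.card t := by rw [← hlcoe]; simp
  refine ⟨chunks L l, ?_, ?_, ?_⟩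
  · rw [chunks_count L hL l.length l le_rfl, hlen]
  · rw [chunks_sum L l.length l le_rfl, hlcoe]
  · intro b hb
    exact ⟨chunks_len L hL l.length l le_rfl b hb,
      chunks_chain L l.length l le_rfl hlchain b hb⟩

theorem lower_aux (L : ℕ) (m : α) : ∀ bins : List (List α),
    (∀ b ∈ bins, b.length ≤ L ∧ List.Chain' (· ≠ ·) b) →
    Multiset.card (bins.map (fun b : List α => (b : Multiset α))).sum ≤ bins.length * L ∧
    2 * Multiset.count m (bins.map (fun b : List α => (b : Multiset α))).sum ≤
      Multiset.card (bins.map (fun b : List α => (b : Multiset α))).sum + bins.length := by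
  intro bins
  induction bins with
  | nil => simp
  | cons b bs ih =>
    intro h
    have hb := h b (by simp)
    have ihs := ih (fun x hx => h x (List.mem_cons_of_mem _ hx))
    have hcnt := chain'_two_mul_count_le b.length b le_rfl hb.2 m
    simp only [List.map_cons, List.sum_cons, List.length_cons]
    rw [Multiset.card_add, Multiset.count_add]
    simp only [Multiset.coe_card, Multiset.coe_count]
    constructor
    · have h5 : (bs.length + 1) * L = bs.length * L + L := by ring
      have := hb.1; omega
    · omega

theorem ilv_sum (x : α) : ∀ ps : List (List α),
    ((ps.map (ilv x)).map (fun b : List α => (b : Multiset α))).sum =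
      Multiset.replicate (ps.length +
        Multiset.card ((ps.map (fun b : List α => (b : Multiset α))).sum)) x +
      (ps.map (fun b : List α => (b : Multiset α))).sum := by
  intro ps
  induction ps with
  | nil => simp
  | cons p ps ih =>
    simp only [List.map_cons, List.sum_cons, ih, ilv_coe, List.length_cons,
      Multiset.card_add, Multiset.coe_card]
    simp only [Multiset.replicate_add, Multiset.replicate_one]
    abel

theorem repl_bins_sum (x : α) : ∀ k : ℕ,
    (((List.replicate k [x]).map (fun b : List α => (b : Multiset α))).sum
      = Multiset.replicate k x) := by
  intro k
  induction k with
  | zero => simp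
  | succ k ih =>
    rw [List.replicate_succ, List.map_cons, List.sum_cons, ih, Multiset.replicate_succ]
    rfl

theorem coeM_eq {α : Type*} [DecidableEq α] (bins : List (List α)) :
    (bins.map (fun b => (b : Multiset α))) = bins.map (fun b : List α => (b : Multiset α)) := by
  induction bins with
  | nil => rfl
  | cons b bs ih => simp only [List.map_cons] at *; rw [← ih]; rfl

theorem pack_exists (L : ℕ) (hodd : Odd L) (hL : 3 ≤ L) (s : Multiset α) (m : α)
    (hmax : ∀ a : α, s.count a ≤ s.count m) :
    ∃ bins : List (List α),
        bins.length = max (2 * s.count m - Multiset.card s)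
          ((Multiset.card s + L - 1) / L) ∧
        (bins.map (fun b : List α => (b : Multiset α))).sum = s ∧
        ∀ b ∈ bins, b.length ≤ L ∧ List.Chain' (· ≠ ·) b := by
  obtain ⟨h, hLh⟩ := hodd
  have hh : 1 ≤ h := by omega
  have hLpos : 0 < L := by omega
  obtain ⟨n, hn⟩ : ∃ k, k = Multiset.card s := ⟨_, rfl⟩
  obtain ⟨c, hc⟩ : ∃ k, k = s.count m := ⟨_, rfl⟩
  obtain ⟨q, hqdef⟩ : ∃ k, k = (n + L - 1) / L := ⟨_, rfl⟩
  rw [← hn, ← hc, ← hqdef]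
  have hmax' : ∀ a : α, s.count a ≤ c := fun a => by rw [hc]; exact hmax a
  -- division facts about q
  have hdm := Nat.div_add_mod (n + L - 1) L
  have hmlt : (n + L - 1) % L < L := Nat.mod_lt _ hLpos
  obtain ⟨P, hP⟩ : ∃ P, P = L * ((n + L - 1) / L) := ⟨_, rfl⟩
  rw [← hP] at hdm
  have hPq : P = L * q := by rw [hP, hqdef]
  obtain ⟨QL, hQL⟩ : ∃ k, k = q * L := ⟨_, rfl⟩
  have hQLP : QL = P := by rw [hQL, hPq]; ring
  -- case n = 0
  rcases Nat.eq_zero_or_pos n with hn0 | hnpos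
  · have hs0 : s = 0 := by rw [← Multiset.card_eq_zero, ← hn, hn0]
    have hc0 : c = 0 := by rw [hc, hs0]; simp
    have hq0 : q = 0 := by rw [hqdef, hn0]; exact Nat.div_eq_of_lt (by omega)
    exact ⟨[], by simp [hc0, hq0, hn0], by simp [hs0], by simp⟩
  -- n ≥ 1
  have hq1 : 1 ≤ q := by rw [hqdef, Nat.one_le_div_iff hLpos]; omega
  rcases le_or_gt (2 * c) (n + 1) with hsmall | hbig
  · -- balanced case
    obtain ⟨bins, hb1, hb2, hb3⟩ := packA L (by omega) s
      (fun y => by have := hmax' y; rw [← hn]; omega)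
    refine ⟨bins, ?_, hb2, hb3⟩
    rw [hb1, ← hn, ← hqdef]
    omega
  · -- d ≥ 2
    obtain ⟨d, hd⟩ : ∃ k, k = 2 * c - n := ⟨_, rfl⟩
    have hd2 : 2 ≤ d := by omega
    have hdc : 2 * c = n + d := by omega
    set oL := (s.filter (fun x => ¬ x = m)).toList with hoL
    have hoLcoe : (oL : Multiset α) = s.filter (fun x => ¬ x = m) := Multiset.coe_toList _
    have hsplit : Multiset.replicate c m + ↑oL = s := by
      rw [hoLcoe, hc, ← Multiset.filter_eq' s m]
      exact Multiset.filter_add_not _ s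
    have hoLm : ∀ y ∈ oL, y ≠ m := by
      intro y hy
      have : y ∈ s.filter (fun x => ¬ x = m) := by rw [← hoLcoe]; exact hy
      exact (Multiset.mem_filter.mp this).2
    obtain ⟨r, hrdef⟩ : ∃ k, k = oL.length := ⟨_, rfl⟩
    have hr : n = c + r := by
      have := congrArg Multiset.card hsplit
      simp at this
      omega
    have hcr : c = r + d := by omega
    obtain ⟨DH, hDH⟩ : ∃ k, k = d * h := ⟨_, rfl⟩
    have hdL : d * L = 2 * DH + d := by rw [hDH, hLh]; ring
    rcases le_or_gt q d with hqd | hdq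
    · -- β1 : K = d
      have hnle : n ≤ 2 * DH + d := by
        have h1 : q * L ≤ d * L := Nat.mul_le_mul_right L hqd
        omega
      have hrdh : r ≤ DH := by omega
      have hpcount : (chunks h oL).length = (r + h - 1) / h := by
        rw [hrdef]; exact chunks_count h hh oL.length oL le_rfl
      obtain ⟨p, hpdef⟩ : ∃ k, k = (chunks h oL).length := ⟨_, rfl⟩
      have hpd : p ≤ d := by
        rw [hpdef, hpcount]
        calc (r + h - 1) / h ≤ (h * d + (h - 1)) / h := by
              apply Nat.div_le_div_right
              have hhd : h * d = d * h := by ring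
              rw [hhd, ← hDH]; omega
          _ = d := by rw [Nat.mul_add_div (by omega), Nat.div_eq_of_lt (by omega)]; omega
      have hsum_ps : (((chunks h oL).map (fun b : List α => (b : Multiset α))).sum) = ↑oL :=
        chunks_sum h oL.length oL le_rfl
      have hcard_ps :
          Multiset.card (((chunks h oL).map (fun b : List α => (b : Multiset α))).sum) = r := by
        rw [hsum_ps]; simp [hrdef]
      refine ⟨(chunks h oL).map (ilv m) ++ List.replicate (d - p) [m], ?_, ?_, ?_⟩
      · simp only [List.length_append, List.length_map, List.length_replicate]
        rw [← hpdef]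
        omega
      · rw [List.map_append, List.sum_append, ilv_sum, hcard_ps, hsum_ps, repl_bins_sum]
        rw [← hsplit, ← hpdef]
        have hrepl : Multiset.replicate p m + Multiset.replicate r m
            + Multiset.replicate (d - p) m = Multiset.replicate c m := by
          rw [← Multiset.replicate_add, ← Multiset.replicate_add]
          congr 1
          omega
        rw [← hrepl, Multiset.replicate_add]
        abel
      · intro b hb
        rcases List.mem_append.mp hb with hb | hb
        · obtain ⟨pc, hpc, rfl⟩ := List.mem_map.mp hb
          constructor
          · rw [ilv_length]
            have := chunks_len h hh oL.length oL le_rfl pc hpc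
            omega
          · exact ilv_chain m pc (fun o ho =>
              hoLm o (chunks_subset h oL.length oL le_rfl pc hpc o ho))
        · rw [List.eq_of_mem_replicate hb]
          exact ⟨by simp; omega, List.isChain_singleton _⟩
    · -- β2 : K = q
      obtain ⟨j, hj⟩ : ∃ k, k = d - 1 := ⟨_, rfl⟩
      have hj1 : 1 ≤ j := by omega
      have hdLn : d * L ≤ n - 1 := by
        have h1 : d * L ≤ (q - 1) * L := Nat.mul_le_mul_right L (by omega)
        have h2 : (q - 1) * L = q * L - L := by rw [Nat.sub_mul, one_mul]
        omega
      obtain ⟨A, hA⟩ : ∃ k, k = j * h := ⟨_, rfl⟩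
      have hjL2 : j * L = 2 * A + j := by rw [hA, hLh]; ring
      have hjLd : j * L ≤ d * L := Nat.mul_le_mul_right L (by omega)
      have h2h : 2 * h ≤ DH := by
        rw [hDH]; calc 2 * h = h * 2 := by ring
          _ ≤ h * d := Nat.mul_le_mul_left h hd2
          _ = d * h := by ring
      have hADH : A + h = DH := by
        rw [hA, hDH, hj, Nat.sub_mul, one_mul]
        have : h ≤ d * h := by omega
        omega
      have hTr : A ≤ r := by omega
      set tk := oL.take A with htk
      set rest := oL.drop A with hrest
      have htklen : tk.length = A := by rw [htk]; simp; omega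
      have hrestlen : rest.length = r - A := by rw [hrest]; simp [← hrdef]
      have hpcount : (chunks h tk).length = j := by
        rw [chunks_count h hh tk.length tk le_rfl, htklen, hA,
          show j * h + h - 1 = h * j + (h - 1) by ring_nf; omega,
          Nat.mul_add_div (by omega), Nat.div_eq_of_lt (by omega)]
        omega
      have hsum_ps : (((chunks h tk).map (fun b : List α => (b : Multiset α))).sum) = ↑tk :=
        chunks_sum h tk.length tk le_rfl
      have hcard_ps :
          Multiset.card (((chunks h tk).map (fun b : List α => (b : Multiset α))).sum) = A := by
        rw [hsum_ps]; simp [htklen]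
      have hcTj : A + j ≤ c := by omega
      have hrestm : ∀ y ∈ rest, y ≠ m := fun y hy => hoLm y (List.mem_of_mem_drop hy)
      have htcard : Multiset.card (Multiset.replicate (c - (A + j)) m + (rest : Multiset α)) = n - j * L := by
        simp [hrestlen]
        omega
      have htbd : ∀ y, 2 * Multiset.count y (Multiset.replicate (c - (A + j)) m + (rest : Multiset α))
          ≤ Multiset.card (Multiset.replicate (c - (A + j)) m + (rest : Multiset α)) + 1 := by
        intro y
        rw [htcard, Multiset.count_add, Multiset.count_replicate, Multiset.coe_count]
        by_cases hym : y = m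
        · have hzero : rest.count y = 0 := by
            rw [List.count_eq_zero]
            intro hmem
            exact hrestm y hmem hym
          rw [if_pos hym.symm, hzero]
          omega
        · rw [if_neg (fun e => hym e.symm)]
          have hcle := List.count_le_length (a := y) (l := rest)
          rw [hrestlen] at hcle
          omega
      obtain ⟨binsA, hbA1, hbA2, hbA3⟩ :=
        packA L (by omega) (Multiset.replicate (c - (A + j)) m + (rest : Multiset α)) htbd
      have hbA1' : binsA.length = q - j := by
        rw [hbA1, htcard]
        rw [show n - j * L + L - 1 = (n + L - 1) - L * j by
          rw [show L * j = j * L by ring]; omega]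
        rw [Nat.sub_mul_div _ _ _]
        rw [← hqdef]
      refine ⟨(chunks h tk).map (ilv m) ++ binsA, ?_, ?_, ?_⟩
      · simp only [List.length_append, List.length_map, hpcount, hbA1']
        omega
      · rw [List.map_append, List.sum_append, ilv_sum, hcard_ps, hsum_ps, hbA2, hpcount]
        rw [← hsplit]
        have htkrest : ((tk : Multiset α) + (rest : Multiset α)) = ↑oL := by
          rw [show ((tk : Multiset α) + (rest : Multiset α)) = ((tk ++ rest : List α) : Multiset α) from rfl, htk, hrest,
            List.take_append_drop]
        have hrepl : Multiset.replicate j m + Multiset.replicate A m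
            + Multiset.replicate (c - (A + j)) m = Multiset.replicate c m := by
          rw [← Multiset.replicate_add, ← Multiset.replicate_add]
          congr 1
          omega
        rw [← htkrest, ← hrepl, Multiset.replicate_add]
        abel
      · intro b hb
        rcases List.mem_append.mp hb with hb | hb
        · obtain ⟨pc, hpc, rfl⟩ := List.mem_map.mp hb
          constructor
          · rw [ilv_length]
            have := chunks_len h hh tk.length tk le_rfl pc hpc
            omega
          · exact ilv_chain m pc (fun o ho =>
              hoLm o (List.mem_of_mem_take (chunks_subset h tk.length tk le_rfl pc hpc o ho)))
        · exact hbA3 b hb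

end AltUnitAux


theorem alternate_unit_optimal_odd {α : Type*} [DecidableEq α]
    (L : ℕ) (hodd : Odd L) (hL : 3 ≤ L) (s : Multiset α) (m : α)
    (hmax : ∀ a : α, s.count a ≤ s.count m) :
    (∃ bins : List (List α),
        bins.length = max (2 * s.count m - Multiset.card s)
          ((Multiset.card s + L - 1) / L) ∧
        (bins.map (fun b => (b : Multiset α))).sum = s ∧
        ∀ b ∈ bins, b.length ≤ L ∧ List.Chain' (· ≠ ·) b) ∧
    (∀ bins : List (List α),
        (bins.map (fun b => (b : Multiset α))).sum = s →
        (∀ b ∈ bins, b.length ≤ L ∧ List.Chain' (· ≠ ·) b) →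
        max (2 * s.count m - Multiset.card s) ((Multiset.card s + L - 1) / L)
          ≤ bins.length) := by
  have hLpos : 0 < L := by omega
  constructor
  · obtain ⟨bins, h1, h2, h3⟩ := pack_exists L hodd hL s m hmax
    refine ⟨bins, h1, ?_, h3⟩
    rw [coeM_eq]
    exact h2
  · intro bins hsum hvalid
    rw [coeM_eq] at hsum
    obtain ⟨h1, h2⟩ := lower_aux L m bins hvalid
    rw [hsum] at h1 h2
    apply max_le
    · omega
    · calc (Multiset.card s + L - 1) / L ≤ (bins.length * L + L - 1) / L := by
            apply Nat.div_le_div_right; omega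
        _ = bins.length := by
            rw [show bins.length * L + L - 1 = L * bins.length + (L - 1) by
              rw [Nat.mul_comm]; omega]
            rw [Nat.mul_add_div hLpos, Nat.div_eq_of_lt (by omega)]
            omega
end
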